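/- Let a = (a1, a2, a3, a4) ∈ ℝ⁴ with a2 - a1 = a4 - a3 > 0, and let m be a positive integer. Define the 4×4 matrix M_m(a,c) with rows: (m²(a1-c)-1, 1, 1, -1), (-1, m²(a2-c)+1, 1, -1), (1, -1, m²(a3-c)-1, 1), (1, -1, -1, m²(a4-c)+1). Then det M_m(a,c) = m⁸(a1-c)(a2-c)(a3-c)(a4-c) + m⁶[ -(a2-c)(a3-c)(a4-c) + (a1-c)(a3-c)(a4-c) - (a1-c)(a2-c)(a4-c) + (a1-c)(a2-c)(a3-c) ]. -/

import Mathlib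

theorem stmt_2 (a1 a2 a3 a4 c : ℝ) (heq : a2 - a1 = a4 - a3) (hpos : 0 < a2 - a1)
    (m : ℕ) (hm : 0 < m) :
    Matrix.det
      !![(m : ℝ)^2 * (a1 - c) - 1, 1, 1, -1;
         -1, (m : ℝ)^2 * (a2 - c) + 1, 1, -1;
         1, -1, (m : ℝ)^2 * (a3 - c) - 1, 1;
         1, -1, -1, (m : ℝ)^2 * (a4 - c) + 1]
    = (m : ℝ)^8 * (a1 - c) * (a2 - c) * (a3 - c) * (a4 - c)
      + (m : ℝ)^6 *
        ( -((a2 - c) * (a3 - c) * (a4 - c))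
          + (a1 - c) * (a3 - c) * (a4 - c)
          - (a1 - c) * (a2 - c) * (a4 - c)
          + (a1 - c) * (a2 - c) * (a3 - c) ) := by
  simp [Matrix.det_succ_row_zero, Fin.sum_univ_succ, Fin.succAbove,
    Matrix.cons_val_succ, show (Fin.castSucc 2 : Fin 4) = 2 from rfl]
  ring
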